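/- Let 1 ≤ u ≤ k−1 and let M_{k,u}^β be the quaternary MacDonald code of type β. Then for every r with u < r ≤ k: r_L(M_{k,u}^β) ≤ 2^{k−1}(2^k − 1) − 2^{r−1}(2^r − 1) + r_L(M_{r,u}^β), and r_E(M_{k,u}^β) ≤ 2^{2r−1}(4^{k−r+1} − 1)/3 + 4^{r−1}(4^{k−r} − 1) − 3·2^{r−2}(2^{k−r} − 1) + r_E(M_{r,u}^β). -/

import Mathlib

/-- The Lee weight on `ZMod 4`: `w_L(0)=0, w_L(1)=1, w_L(2)=2, w_L(3)=1`. -/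
def leeWt (x : ZMod 4) : ℕ := min x.val (4 - x.val)

/-- The Euclidean weight on `ZMod 4`: `w_E(0)=0, w_E(1)=1, w_E(2)=4, w_E(3)=1`. -/
def euclWt (x : ZMod 4) : ℕ := (min x.val (4 - x.val)) ^ 2

/-- The Lee distance between two vectors over `ZMod 4`. -/
def dLee {ι : Type*} [Fintype ι] (x y : ι → ZMod 4) : ℕ := ∑ i, leeWt (x i - y i)

/-- The Euclidean distance between two vectors over `ZMod 4`. -/
def dEucl {ι : Type*} [Fintype ι] (x y : ι → ZMod 4) : ℕ := ∑ i, euclWt (x i - y i)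

/-- The covering radius of a code over `ZMod 4` with respect to the Lee distance. -/
noncomputable def covRadLee {ι : Type*} [Fintype ι] (C : Set (ι → ZMod 4)) : ℕ :=
  sSup (Set.range fun u : ι → ZMod 4 => sInf (dLee u '' C))

/-- The covering radius of a code over `ZMod 4` with respect to the Euclidean distance. -/
noncomputable def covRadEucl {ι : Type*} [Fintype ι] (C : Set (ι → ZMod 4)) : ℕ :=
  sSup (Set.range fun u : ι → ZMod 4 => sInf (dEucl u '' C))

/-- The length `2^(k-1) * (2^k - 1)` of the type β simplex code. -/
def lenB (k : ℕ) : ℕ := 2 ^ (k - 1) * (2 ^ k - 1)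

/-- Entry `(i, j)` of the generator matrix `G_k^α` of the type α simplex code:
column `j` (for `j < 4^k`) is the base-4 digit expansion of `j`, so the columns are
exactly all elements of `(ZMod 4)^k`, each occurring once. -/
def galphaEnt (i j : ℕ) : ZMod 4 := ((j / 4 ^ i) % 4 : ℕ)

/-- Entry `(i, j)` of the recursively defined generator matrix `G_k^β`:
`G_2^β` has rows `(1,1,1,1,0,2)` and `(0,1,2,3,1,1)`; for `k > 2`, the first row of
`G_k^β` consists of `4^(k-1)` ones, then `lenB (k-1)` zeros, then `lenB (k-1)` twos,
and the remaining rows are `[G_(k-1)^α | G_(k-1)^β | G_(k-1)^β]`. -/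
def gbetaEnt : ℕ → ℕ → ℕ → ZMod 4
  | 0, _, _ => 0
  | 1, _, _ => 0
  | 2, i, j =>
      if i = 0 then (if j < 4 then 1 else if j = 4 then 0 else 2)
      else (if j = 0 then 0 else if j = 1 then 1 else if j = 2 then 2
            else if j = 3 then 3 else 1)
  | (k + 3), i, j =>
      if i = 0 then
        (if j < 4 ^ (k + 2) then 1
         else if j < 4 ^ (k + 2) + 2 ^ (k + 1) * (2 ^ (k + 2) - 1) then 0 else 2)
      else if j < 4 ^ (k + 2) then galphaEnt (i - 1) j
      else if j < 4 ^ (k + 2) + 2 ^ (k + 1) * (2 ^ (k + 2) - 1) then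
        gbetaEnt (k + 2) (i - 1) (j - 4 ^ (k + 2))
      else gbetaEnt (k + 2) (i - 1) (j - 4 ^ (k + 2) - 2 ^ (k + 1) * (2 ^ (k + 2) - 1))

/-- The quaternary simplex code of type β: the `ZMod 4`-span of the rows of `G_k^β`. -/
def simplexBeta (k : ℕ) : Set (Fin (lenB k) → ZMod 4) :=
  Set.range fun a : Fin k → ZMod 4 => fun j : Fin (lenB k) => ∑ i : Fin k, a i * gbetaEnt k i j

/-- The starting position `(4^k - 4^u)/3 = 4^(k-1) + 4^(k-2) + ⋯ + 4^u` of the block of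
columns of `G_k^β` whose first `k - u` entries are `0` and whose last `u` entries form the
columns of `G_u^β` (these are the columns deleted to form the MacDonald code). -/
def offB (k u : ℕ) : ℕ := (4 ^ k - 4 ^ u) / 3

/-- The quaternary MacDonald code of type β, `M_{k,u}^β`: the `ZMod 4`-span of the rows of
the matrix obtained from `G_k^β` by deleting the `lenB u` columns (in positions
`offB k u, …, offB k u + lenB u - 1`) whose first `k - u` entries are `0` and whose last
`u` entries form the columns of `G_u^β`. -/
def macDonaldBeta (k u : ℕ) :
    Set ({j : Fin (lenB k) // (j : ℕ) < offB k u ∨ offB k u + lenB u ≤ (j : ℕ)} → ZMod 4) :=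
  Set.range fun a : Fin k → ZMod 4 =>
    fun j : {j : Fin (lenB k) // (j : ℕ) < offB k u ∨ offB k u + lenB u ≤ (j : ℕ)} =>
      ∑ i : Fin k, a i * gbetaEnt k i j.1


set_option maxHeartbeats 1000000

def dW {ι : Type*} [Fintype ι] (w : ZMod 4 → ℕ) (x y : ι → ZMod 4) : ℕ := ∑ i, w (x i - y i)

noncomputable def covRadW {ι : Type*} [Fintype ι] (w : ZMod 4 → ℕ) (C : Set (ι → ZMod 4)) : ℕ :=
  sSup (Set.range fun u : ι → ZMod 4 => sInf (dW w u '' C))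

lemma bddAbove_aux {ι : Type*} [Fintype ι] (w : ZMod 4 → ℕ) (hw : ∀ e, w e ≤ 4)
    {C : Set (ι → ZMod 4)} (h0 : C.Nonempty) :
    BddAbove (Set.range fun x : ι → ZMod 4 => sInf (dW w x '' C)) := by
  obtain ⟨c, hc⟩ := h0
  refine ⟨4 * Fintype.card ι, ?_⟩
  rintro _ ⟨x, rfl⟩
  have h1 : sInf (dW w x '' C) ≤ dW w x c := Nat.sInf_le ⟨c, hc, rfl⟩
  have h2 : dW w x c ≤ 4 * Fintype.card ι := by
    unfold dW
    calc ∑ i, w (x i - c i) ≤ ∑ _i : ι, 4 := Finset.sum_le_sum fun i _ => hw _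
    _ = 4 * Fintype.card ι := by simp [Finset.sum_const, mul_comm]
  exact h1.trans h2

lemma zmod4_sum (f : ZMod 4 → ℕ) : ∑ a : ZMod 4, f a = f 0 + f 1 + f 2 + f 3 := by
  have h : (Finset.univ : Finset (ZMod 4)) = {0, 1, 2, 3} := by decide
  rw [h]
  rw [Finset.sum_insert (by decide), Finset.sum_insert (by decide),
    Finset.sum_insert (by decide), Finset.sum_singleton]
  ring

lemma zmod4_sum_two (f : ZMod 4 → ℕ) : ∑ a : ZMod 4, f (2 * a) = 2 * (f 0 + f 2) := by
  rw [zmod4_sum (fun a => f (2*a))]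
  have e1 : (2 * 0 : ZMod 4) = 0 := by decide
  have e2 : (2 * 1 : ZMod 4) = 2 := by decide
  have e3 : (2 * 2 : ZMod 4) = 0 := by decide
  have e4 : (2 * 3 : ZMod 4) = 2 := by decide
  rw [e1, e2, e3, e4]; ring

lemma lenB_succ (k : ℕ) : lenB (k+1) = 4 ^ k + 2 * lenB k := by
  cases k with
  | zero => decide
  | succ k =>
    have h1 : (1:ℕ) ≤ 2 ^ (k+2) := Nat.one_le_two_pow
    have h2 : (1:ℕ) ≤ 2 ^ (k+1) := Nat.one_le_two_pow
    unfold lenB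
    zify [h1, h2]
    have h4 : (4:ℤ) ^ (k+1) = 2 ^ (k+1) * 2 ^ (k+1) := by
      rw [← mul_pow]; norm_num
    rw [h4]
    push_cast
    ring_nf

lemma offB_succ (t u : ℕ) (h : u ≤ t) : offB (t+1) u = 4 ^ t + offB t u := by
  have hle : (4:ℕ)^u ≤ 4^t := Nat.pow_le_pow_right (by norm_num) h
  have h4 : (4:ℕ)^(t+1) = 4 * 4^t := by ring
  unfold offB
  rw [h4]
  omega

lemma offB_add_lenB_le : ∀ t u : ℕ, u ≤ t → offB t u + lenB u ≤ lenB t := by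
  intro t
  induction t with
  | zero => intro u hu; interval_cases u; simp [offB, lenB]
  | succ t ih =>
    intro u hu
    rcases Nat.lt_or_ge u (t+1) with h | h
    · have : u ≤ t := by omega
      rw [offB_succ t u this, lenB_succ]
      have := ih u this
      omega
    · have : u = t + 1 := by omega
      subst this
      simp [offB]

lemma gbeta_row0 (m j : ℕ) : gbetaEnt (m+3) 0 j =
    if j < 4^(m+2) then 1 else if j < 4^(m+2) + 2^(m+1)*(2^(m+2)-1) then 0 else 2 := by
  simp [gbetaEnt]

lemma gbeta_rowsucc (m i j : ℕ) : gbetaEnt (m+3) (i+1) j =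
    if j < 4^(m+2) then galphaEnt i j
    else if j < 4^(m+2) + 2^(m+1)*(2^(m+2)-1) then gbetaEnt (m+2) i (j - 4^(m+2))
    else gbetaEnt (m+2) i (j - 4^(m+2) - 2^(m+1)*(2^(m+2)-1)) := by
  simp [gbetaEnt]

lemma hLval (m : ℕ) : lenB (m+2) = 2^(m+1) * (2^(m+2) - 1) := rfl

lemma zero_mem_mdB (k u : ℕ) :
    (0 : {j : Fin (lenB k) // (j : ℕ) < offB k u ∨ offB k u + lenB u ≤ (j : ℕ)} → ZMod 4)
      ∈ macDonaldBeta k u :=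
  ⟨0, by funext j; simp⟩

lemma covRadW_step (w : ZMod 4 → ℕ) (S4 S2 B : ℕ)
    (h4 : ∀ y : ZMod 4, ∑ c : ZMod 4, w (y - c) = S4)
    (h2 : ∀ e : ZMod 4, w e + w (e - 2) ≤ S2)
    (hw : ∀ e, w e ≤ 4)
    (m u : ℕ) (hu : u ≤ m + 2)
    (hB : S4 * 4 ^ (m+2) + 2 * S2 * lenB (m+2) ≤ 4 * B) :
    covRadW w (macDonaldBeta (m+3) u) ≤ B + covRadW w (macDonaldBeta (m+2) u) := by
  classical
  have hLv := hLval m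
  have hoff : offB (m+3) u = 4^(m+2) + offB (m+2) u := offB_succ (m+2) u hu
  have hlen3 : lenB (m+3) = 4^(m+2) + 2 * lenB (m+2) := lenB_succ (m+2)
  have hdel : offB (m+2) u + lenB u ≤ lenB (m+2) := offB_add_lenB_le (m+2) u hu
  refine csSup_le (Set.range_nonempty _) ?_
  rintro _ ⟨x, rfl⟩
  -- the embedding of coordinates of the smaller code
  have hlt : ∀ j' : {j : Fin (lenB (m+2)) // (j : ℕ) < offB (m+2) u ∨ offB (m+2) u + lenB u ≤ (j : ℕ)},
      4^(m+2) + (j'.1 : ℕ) < lenB (m+3) := by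
    intro j'; have := j'.1.2; omega
  have hcond : ∀ j' : {j : Fin (lenB (m+2)) // (j : ℕ) < offB (m+2) u ∨ offB (m+2) u + lenB u ≤ (j : ℕ)},
      (4^(m+2) + (j'.1 : ℕ) < offB (m+3) u ∨ offB (m+3) u + lenB u ≤ 4^(m+2) + (j'.1 : ℕ)) := by
    intro j'; have := j'.2; omega
  set emb : {j : Fin (lenB (m+2)) // (j : ℕ) < offB (m+2) u ∨ offB (m+2) u + lenB u ≤ (j : ℕ)} →
      {j : Fin (lenB (m+3)) // (j : ℕ) < offB (m+3) u ∨ offB (m+3) u + lenB u ≤ (j : ℕ)} :=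
    fun j' => ⟨⟨4^(m+2) + (j'.1 : ℕ), hlt j'⟩, hcond j'⟩ with hemb
  set x' := fun j' => x (emb j') with hx'
  have hne' : (macDonaldBeta (m+2) u).Nonempty := ⟨0, zero_mem_mdB _ _⟩
  obtain ⟨c', hc'C, hc'eq⟩ := Nat.sInf_mem (hne'.image (dW w x'))
  have hle' : dW w x' c' ≤ covRadW w (macDonaldBeta (m+2) u) := by
    rw [hc'eq]
    exact le_csSup (bddAbove_aux w hw hne') (Set.mem_range_self x')
  obtain ⟨a', rfl⟩ := hc'C
  clear hc'eq
  -- the candidate codewords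
  set cw : ZMod 4 → _ := fun a0 =>
    (fun j : {j : Fin (lenB (m+3)) // (j : ℕ) < offB (m+3) u ∨ offB (m+3) u + lenB u ≤ (j : ℕ)} =>
      ∑ i : Fin (m+3), (Fin.cons a0 a' : Fin (m+3) → ZMod 4) i * gbetaEnt (m+3) i j.1) with hcwdef
  have hcwmem : ∀ a0, cw a0 ∈ macDonaldBeta (m+3) u := fun a0 => ⟨(Fin.cons a0 a' : Fin (m+3) → ZMod 4), rfl⟩
  have hcw : ∀ (a0 : ZMod 4) j, cw a0 j
      = a0 * gbetaEnt (m+3) 0 (j.1:ℕ) + ∑ i : Fin (m+2), a' i * gbetaEnt (m+3) ((i:ℕ)+1) (j.1:ℕ) := by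
    intro a0 j
    show ∑ i : Fin (m+2+1), (Fin.cons a0 a' : Fin (m+2+1) → ZMod 4) i * gbetaEnt (m+3) i j.1 = _
    rw [Fin.sum_univ_succ]
    simp [Fin.cons_zero, Fin.cons_succ, Fin.val_succ]
  have halpha : ∀ (a0 : ZMod 4) j, (j.1:ℕ) < 4^(m+2) →
      cw a0 j = a0 + ∑ i : Fin (m+2), a' i * galphaEnt i (j.1:ℕ) := by
    intro a0 j hj
    rw [hcw, gbeta_row0, if_pos hj]
    have hrs : ∀ i : Fin (m+2), gbetaEnt (m+3) ((i:ℕ)+1) (j.1:ℕ) = galphaEnt i (j.1:ℕ) := by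
      intro i; rw [gbeta_rowsucc, if_pos hj]
    simp only [hrs]
    ring
  have hmid : ∀ (a0 : ZMod 4) j, 4^(m+2) ≤ (j.1:ℕ) → (j.1:ℕ) < 4^(m+2) + lenB (m+2) →
      cw a0 j = ∑ i : Fin (m+2), a' i * gbetaEnt (m+2) i ((j.1:ℕ) - 4^(m+2)) := by
    intro a0 j hj1 hj2
    have hA : ¬ ((j.1:ℕ) < 4^(m+2)) := by clear hle'; omega
    have hBc : (j.1:ℕ) < 4^(m+2) + 2^(m+1)*(2^(m+2)-1) := by clear hle'; omega
    rw [hcw, gbeta_row0, if_neg hA, if_pos hBc]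
    have hrs : ∀ i : Fin (m+2), gbetaEnt (m+3) ((i:ℕ)+1) (j.1:ℕ)
        = gbetaEnt (m+2) i ((j.1:ℕ) - 4^(m+2)) := by
      intro i; rw [gbeta_rowsucc, if_neg hA, if_pos hBc]
    simp only [hrs]
    ring
  have hhi : ∀ (a0 : ZMod 4) j, 4^(m+2) + lenB (m+2) ≤ (j.1:ℕ) →
      cw a0 j = 2 * a0 + ∑ i : Fin (m+2), a' i * gbetaEnt (m+2) i ((j.1:ℕ) - 4^(m+2) - lenB (m+2)) := by
    intro a0 j hj1
    have hA : ¬ ((j.1:ℕ) < 4^(m+2)) := by clear hle'; omega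
    have hBc : ¬ ((j.1:ℕ) < 4^(m+2) + 2^(m+1)*(2^(m+2)-1)) := by clear hle'; omega
    rw [hcw, gbeta_row0, if_neg hA, if_neg hBc]
    have hrs : ∀ i : Fin (m+2), gbetaEnt (m+3) ((i:ℕ)+1) (j.1:ℕ)
        = gbetaEnt (m+2) i ((j.1:ℕ) - 4^(m+2) - lenB (m+2)) := by
      intro i
      rw [gbeta_rowsucc, if_neg hA, if_neg hBc, ← hLv]
    simp only [hrs]
    ring
  set SA := (Finset.univ.filter (fun j : {j : Fin (lenB (m+3)) // (j : ℕ) < offB (m+3) u ∨ offB (m+3) u + lenB u ≤ (j : ℕ)} => ((j.1:ℕ) < 4^(m+2)))) with hSA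
  set SM := ((Finset.univ.filter (fun j : {j : Fin (lenB (m+3)) // (j : ℕ) < offB (m+3) u ∨ offB (m+3) u + lenB u ≤ (j : ℕ)} => ¬((j.1:ℕ) < 4^(m+2)))).filter
      (fun j => ((j.1:ℕ) < 4^(m+2) + lenB (m+2)))) with hSM
  set SH := ((Finset.univ.filter (fun j : {j : Fin (lenB (m+3)) // (j : ℕ) < offB (m+3) u ∨ offB (m+3) u + lenB u ≤ (j : ℕ)} => ¬((j.1:ℕ) < 4^(m+2)))).filter
      (fun j => ¬((j.1:ℕ) < 4^(m+2) + lenB (m+2)))) with hSH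
  -- split the distance into the three column blocks
  have hsplit : ∀ a0 : ZMod 4, dW w x (cw a0) =
      (∑ j ∈ SA, w (x j - cw a0 j))
      + ((∑ j ∈ SM, w (x j - cw a0 j)) + (∑ j ∈ SH, w (x j - cw a0 j))) := by
    intro a0
    rw [hSA, hSM, hSH]
    rw [Finset.sum_filter_add_sum_filter_not
        (Finset.univ.filter (fun j => ¬((j.1:ℕ) < 4^(m+2))))
        (fun j => ((j.1:ℕ) < 4^(m+2) + lenB (m+2))) (fun j => w (x j - cw a0 j))]
    rw [Finset.sum_filter_add_sum_filter_not Finset.univ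
        (fun j => ((j.1:ℕ) < 4^(m+2))) (fun j => w (x j - cw a0 j))]
    rfl
  -- the middle block gives exactly the distance in the smaller code
  have hmid_sum : ∀ a0 : ZMod 4,
      (∑ j ∈ SM, w (x j - cw a0 j))
        = dW w x' (fun j' => ∑ i : Fin (m+2), a' i * gbetaEnt (m+2) i j'.1) := by
    intro a0
    have himg : SM = Finset.image emb Finset.univ := by
      rw [hSM]
      ext j
      simp only [Finset.mem_filter, Finset.mem_image, Finset.mem_univ, true_and, not_lt]
      constructor
      · rintro ⟨h1, h2⟩
        have hjlen := j.1.2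
        have hjc := j.2
        have hb : (j.1:ℕ) - 4^(m+2) < lenB (m+2) := by clear hle'; omega
        refine ⟨⟨⟨(j.1:ℕ) - 4^(m+2), hb⟩, ?_⟩, ?_⟩
        · show (j.1:ℕ) - 4^(m+2) < offB (m+2) u ∨ offB (m+2) u + lenB u ≤ (j.1:ℕ) - 4^(m+2)
          clear hle'; omega
        · rw [hemb]
          apply Subtype.ext
          apply Fin.ext
          show 4^(m+2) + ((j.1:ℕ) - 4^(m+2)) = (j.1:ℕ)
          clear hle'; omega
      · rintro ⟨j', rfl⟩
        have hj' := j'.1.2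
        rw [hemb]
        refine ⟨?_, ?_⟩
        · show 4^(m+2) ≤ 4^(m+2) + (j'.1:ℕ); clear hle'; omega
        · show 4^(m+2) + (j'.1:ℕ) < 4^(m+2) + lenB (m+2); clear hle'; omega
    rw [himg, Finset.sum_image ?_]
    · apply Finset.sum_congr rfl
      intro j' _
      have hv : ((emb j').1:ℕ) = 4^(m+2) + (j'.1:ℕ) := by rw [hemb]
      have h1 : x (emb j') = x' j' := by rw [hx']
      have h2x : cw a0 (emb j') = ∑ i : Fin (m+2), a' i * gbetaEnt (m+2) i (j'.1:ℕ) := by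
        rw [hmid a0 (emb j') (by rw [hv]; clear hle'; omega)
          (by rw [hv]; have := j'.1.2; clear hle'; omega)]
        apply Finset.sum_congr rfl
        intro i _
        rw [hv, Nat.add_sub_cancel_left]
      rw [h1, h2x]
    · intro p _ q _ hpq
      have hvv := congrArg (fun z => ((z.1 : Fin (lenB (m+3))) : ℕ)) hpq
      rw [hemb] at hvv
      simp only at hvv
      apply Subtype.ext
      apply Fin.ext
      clear hle'; omega
  -- the alpha block, summed over the four choices of a0
  have halpha_sum :
      (∑ a0 : ZMod 4, ∑ j ∈ SA, w (x j - cw a0 j)) ≤ S4 * 4^(m+2) := by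
    rw [Finset.sum_comm]
    have hcard : SA.card ≤ (Finset.range (4^(m+2))).card := by
      rw [hSA]
      apply Finset.card_le_card_of_injOn (fun j => (j.1:ℕ))
      · intro j hj
        simp only [Finset.mem_coe, Finset.mem_filter] at hj
        exact Finset.mem_range.2 hj.2
      · intro p _ q _ hpq
        exact Subtype.ext (Fin.ext hpq)
    rw [Finset.card_range] at hcard
    calc (∑ j ∈ SA, ∑ a0 : ZMod 4, w (x j - cw a0 j))
        = ∑ _j ∈ SA, S4 := by
          apply Finset.sum_congr rfl
          intro j hj
          rw [hSA] at hj
          simp only [Finset.mem_filter] at hj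
          calc ∑ a0 : ZMod 4, w (x j - cw a0 j)
              = ∑ a0 : ZMod 4,
                  w ((x j - (∑ i : Fin (m+2), a' i * galphaEnt i (j.1:ℕ))) - a0) := by
                apply Finset.sum_congr rfl
                intro a0 _
                rw [halpha a0 j hj.2]
                congr 1
                ring
          _ = S4 := h4 _
      _ ≤ S4 * 4^(m+2) := by
          rw [Finset.sum_const, smul_eq_mul]
          calc _ ≤ 4^(m+2) * S4 := Nat.mul_le_mul_right _ hcard
          _ = S4 * 4^(m+2) := Nat.mul_comm _ _
  -- the last block, summed over the four choices of a0
  have hhi_sum :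
      (∑ a0 : ZMod 4, ∑ j ∈ SH, w (x j - cw a0 j)) ≤ 2 * S2 * lenB (m+2) := by
    rw [Finset.sum_comm]
    have hcard : SH.card ≤ (Finset.range (lenB (m+2))).card := by
      rw [hSH]
      apply Finset.card_le_card_of_injOn (fun j => (j.1:ℕ) - (4^(m+2) + lenB (m+2)))
      · intro j hj
        simp only [Finset.mem_coe, Finset.mem_filter, not_lt] at hj
        have := j.1.2
        apply Finset.mem_range.2
        show (j.1:ℕ) - (4^(m+2) + lenB (m+2)) < lenB (m+2)
        clear hle'; omega
      · intro p hp q hq hpq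
        simp only [Finset.coe_filter, Set.mem_setOf_eq, not_lt] at hp hq
        apply Subtype.ext
        apply Fin.ext
        simp only at hpq
        clear hle'; omega
    rw [Finset.card_range] at hcard
    calc (∑ j ∈ SH, ∑ a0 : ZMod 4, w (x j - cw a0 j))
        ≤ ∑ _j ∈ SH, 2 * S2 := by
          apply Finset.sum_le_sum
          intro j hj
          rw [hSH] at hj
          simp only [Finset.mem_filter, not_lt] at hj
          have hge : 4^(m+2) + lenB (m+2) ≤ (j.1:ℕ) := hj.2
          calc ∑ a0 : ZMod 4, w (x j - cw a0 j)
              = ∑ a0 : ZMod 4,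
                  w ((x j - (∑ i : Fin (m+2), a' i *
                    gbetaEnt (m+2) i ((j.1:ℕ) - 4^(m+2) - lenB (m+2)))) - 2 * a0) := by
                apply Finset.sum_congr rfl
                intro a0 _
                rw [hhi a0 j hge]
                congr 1
                ring
          _ = 2 * (w ((x j - (∑ i : Fin (m+2), a' i *
                    gbetaEnt (m+2) i ((j.1:ℕ) - 4^(m+2) - lenB (m+2)))) - 0)
                + w ((x j - (∑ i : Fin (m+2), a' i *
                    gbetaEnt (m+2) i ((j.1:ℕ) - 4^(m+2) - lenB (m+2)))) - 2)) :=
                zmod4_sum_two (fun v => w ((x j - (∑ i : Fin (m+2), a' i *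
                    gbetaEnt (m+2) i ((j.1:ℕ) - 4^(m+2) - lenB (m+2)))) - v))
          _ ≤ 2 * S2 := by
                rw [sub_zero]
                have hp := h2 (x j - (∑ i : Fin (m+2), a' i *
                  gbetaEnt (m+2) i ((j.1:ℕ) - 4^(m+2) - lenB (m+2))))
                clear hle'
                omega
      _ ≤ 2 * S2 * lenB (m+2) := by
          rw [Finset.sum_const, smul_eq_mul]
          calc _ ≤ lenB (m+2) * (2 * S2) := Nat.mul_le_mul_right _ hcard
          _ = 2 * S2 * lenB (m+2) := Nat.mul_comm _ _
  -- choose a good a0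
  have hex : ∃ a0 : ZMod 4,
      (∑ j ∈ SA, w (x j - cw a0 j)) + (∑ j ∈ SH, w (x j - cw a0 j)) ≤ B := by
    by_contra hcon
    push_neg at hcon
    have hc4 : (Finset.univ : Finset (ZMod 4)).card = 4 := by decide
    have hsum4 : 4 * (B+1) ≤ ∑ a0 : ZMod 4,
        ((∑ j ∈ SA, w (x j - cw a0 j)) + (∑ j ∈ SH, w (x j - cw a0 j))) := by
      calc 4 * (B+1) = ∑ _a0 : ZMod 4, (B+1) := by
            rw [Finset.sum_const, hc4, smul_eq_mul]
        _ ≤ _ := Finset.sum_le_sum (fun a0 _ => hcon a0)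
    rw [Finset.sum_add_distrib] at hsum4
    have hy1 := halpha_sum
    have hy2 := hhi_sum
    clear hle' hcon
    omega
  obtain ⟨a0, ha0⟩ := hex
  have hfin : dW w x (cw a0) ≤ B + covRadW w (macDonaldBeta (m+2) u) := by
    rw [hsplit a0, hmid_sum a0]
    have hre : ∀ A M H : ℕ, A + (M + H) = (A + H) + M := by intro A M H; ring
    rw [hre]
    exact add_le_add ha0 hle'
  exact le_trans (Nat.sInf_le ⟨cw a0, hcwmem a0, rfl⟩) hfin

lemma lee_tel (s : ℕ) : ∀ d, (∑ t ∈ Finset.range d, (4^((s+t)+2) + lenB ((s+t)+2))) + lenB (s+2) = lenB (s+2+d) := by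
  intro d
  induction d with
  | zero => simp
  | succ d ih =>
    rw [Finset.sum_range_succ]
    have h1 := lenB_succ ((s+d)+2)
    have h2 : lenB (s+2+(d+1)) = lenB ((s+d)+2+1) := by rw [show s+2+(d+1) = (s+d)+2+1 by omega]
    have h3 : lenB (s+2+d) = lenB ((s+d)+2) := by rw [show s+2+d = (s+d)+2 by omega]
    omega

lemma hBF_lee (n : ℕ) : 4 * 4 ^ (n+2) + 2 * 2 * lenB (n+2) ≤ 4 * (4^(n+2) + lenB (n+2)) := by omega

lemma hBF_eucl (n : ℕ) : 6 * 4 ^ (n+2) + 2 * 4 * lenB (n+2) ≤ 4 * (3 * 2^(2*n+3) + 2 * lenB (n+2)) := by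
  have h1 : (4:ℕ)^(n+2) = 2^(2*n+4) := by
    rw [show (4:ℕ) = 2^2 by norm_num, ← pow_mul]
    congr 1
  have h2 : (2:ℕ)^(2*n+4) = 2^(2*n+3) * 2 := pow_succ 2 (2*n+3)
  omega

lemma eucl_q (s : ℕ) : ∀ d : ℕ,
    ((∑ t ∈ Finset.range d, (3 * 2^(2*(s+t)+3) + 2 * lenB ((s+t)+2))) : ℚ)
      ≤ 2^(2*s+3) * (4^(d+1) - 1) / 3 + 4^(s+1) * (4^d - 1) - 3 * 2^s * (2^d - 1) := by
  intro d
  induction d with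
  | zero =>
    simp
    rw [show ((4:ℚ)-1) = 3 by norm_num]
    rw [mul_div_assoc]
    norm_num
  | succ d ih =>
    rw [Finset.sum_range_succ]
    push_cast
    push_cast at ih
    have hone : (1:ℕ) ≤ 2^((s+d)+2) := Nat.one_le_two_pow
    have hlen : ((lenB ((s+d)+2) : ℕ) : ℚ) = 2^(s+d+1) * (2^(s+d+2) - 1) := by
      rw [hLval (s+d)]
      push_cast [hone]
      ring
    have hAd : (0:ℚ) ≤ 2^s := by positivity
    have hBd : (0:ℚ) ≤ 2^d := by positivity
    have e1 : (4:ℚ)^d = 2^d * 2^d := by rw [← mul_pow]; norm_num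
    have e2 : (4:ℚ)^(d+1) = 4 * (2^d * 2^d) := by rw [pow_succ, e1]; ring
    have e3 : (4:ℚ)^(d+1+1) = 16 * (2^d * 2^d) := by rw [pow_succ, e2]; ring
    have e4 : (2:ℚ)^(d+1) = 2 * 2^d := by rw [pow_succ]; ring
    have e5 : (2:ℚ)^(2*s+3) = 8 * (2^s * 2^s) := by
      rw [show 2*s+3 = s+s+3 by ring, pow_add, pow_add]; ring
    have e6 : (4:ℚ)^(s+1) = 4 * (2^s * 2^s) := by
      rw [show (4:ℚ) = 2^2 by norm_num, ← pow_mul, show 2*(s+1) = s+s+2 by ring, pow_add, pow_add]; ring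
    have e7 : (2:ℚ)^(2*(s+d)+3) = 8 * (2^s * 2^s) * (2^d * 2^d) := by
      rw [show 2*(s+d)+3 = s+s+(d+d)+3 by ring, pow_add, pow_add, pow_add, pow_add]; ring
    have e8 : (2:ℚ)^(s+d+1) = 2 * (2^s * 2^d) := by rw [pow_add, pow_add]; ring
    have e9 : (2:ℚ)^(s+d+2) = 4 * (2^s * 2^d) := by rw [pow_add, pow_add]; ring
    have t1 := add_le_add_left ih (3 * (2:ℚ)^(2*(s+d)+3) + 2 * ((lenB ((s+d)+2) : ℕ) : ℚ))
    refine le_trans t1 ?_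
    rw [hlen]
    rw [e2, e3, e4, e5, e6, e7, e8, e9, e1]
    nlinarith [sq_nonneg ((2:ℚ)^s * 2^d), mul_nonneg hAd hBd, sq_nonneg ((2:ℚ)^s)]


lemma covRadW_congr (w : ZMod 4 → ℕ) (k1 k2 u : ℕ) (h : k1 = k2) :
    covRadW w (macDonaldBeta k1 u) = covRadW w (macDonaldBeta k2 u) := by subst h; rfl

lemma covRadW_chain (w : ZMod 4 → ℕ) (S4 S2 : ℕ) (BF : ℕ → ℕ)
    (h4 : ∀ y : ZMod 4, ∑ c : ZMod 4, w (y - c) = S4)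
    (h2 : ∀ e : ZMod 4, w e + w (e - 2) ≤ S2)
    (hw : ∀ e, w e ≤ 4)
    (hBF : ∀ n, S4 * 4 ^ (n+2) + 2 * S2 * lenB (n+2) ≤ 4 * BF n)
    (s u : ℕ) (hu : u ≤ s + 2) :
    ∀ d, covRadW w (macDonaldBeta (s+2+d) u) ≤
      (∑ t ∈ Finset.range d, BF (s+t)) + covRadW w (macDonaldBeta (s+2) u) := by
  intro d
  induction d with
  | zero => simp
  | succ d ih =>
    have hstep := covRadW_step w S4 S2 (BF (s+d)) h4 h2 hw (s+d) u (by omega) (hBF (s+d))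
    rw [covRadW_congr w (s+2+(d+1)) ((s+d)+3) u (by omega)]
    calc covRadW w (macDonaldBeta ((s+d)+3) u)
        ≤ BF (s+d) + covRadW w (macDonaldBeta ((s+d)+2) u) := hstep
      _ = BF (s+d) + covRadW w (macDonaldBeta (s+2+d) u) := by
          rw [covRadW_congr w ((s+d)+2) (s+2+d) u (by omega)]
      _ ≤ BF (s+d) + ((∑ t ∈ Finset.range d, BF (s+t)) + covRadW w (macDonaldBeta (s+2) u)) :=
          Nat.add_le_add_left ih _
      _ = (∑ t ∈ Finset.range (d+1), BF (s+t)) + covRadW w (macDonaldBeta (s+2) u) := by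
          rw [Finset.sum_range_succ]; ring

lemma lee_h4 : ∀ y : ZMod 4, ∑ c : ZMod 4, leeWt (y - c) = 4 := by decide
lemma lee_h2 : ∀ e : ZMod 4, leeWt e + leeWt (e - 2) ≤ 2 := by decide
lemma lee_hw : ∀ e : ZMod 4, leeWt e ≤ 4 := by decide
lemma eucl_h4 : ∀ y : ZMod 4, ∑ c : ZMod 4, euclWt (y - c) = 6 := by decide
lemma eucl_h2 : ∀ e : ZMod 4, euclWt e + euclWt (e - 2) ≤ 4 := by decide
lemma eucl_hw : ∀ e : ZMod 4, euclWt e ≤ 4 := by decide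

/-- Recursive bounds on the covering radii of the type β quaternary MacDonald codes. -/
theorem stmt19 (k u r : ℕ) (hu : 1 ≤ u) (huk : u ≤ k - 1) (hur : u < r) (hrk : r ≤ k) :
    covRadLee (macDonaldBeta k u) ≤
      2 ^ (k - 1) * (2 ^ k - 1) - 2 ^ (r - 1) * (2 ^ r - 1) + covRadLee (macDonaldBeta r u) ∧
      (covRadEucl (macDonaldBeta k u) : ℚ) ≤
        2 ^ (2 * r - 1) * (4 ^ (k - r + 1) - 1) / 3 + 4 ^ (r - 1) * (4 ^ (k - r) - 1)
          - 3 * 2 ^ (r - 2) * (2 ^ (k - r) - 1) + covRadEucl (macDonaldBeta r u) := by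
  obtain ⟨s, rfl⟩ : ∃ s, r = s + 2 := ⟨r - 2, by omega⟩
  obtain ⟨d, rfl⟩ : ∃ d, k = s + 2 + d := ⟨k - (s + 2), by omega⟩
  have hus : u ≤ s + 2 := by omega
  constructor
  · -- Lee distance bound
    have hchain := covRadW_chain leeWt 4 2 (fun n => 4^(n+2) + lenB (n+2))
      lee_h4 lee_h2 lee_hw (fun n => hBF_lee n) s u hus d
    have htel := lee_tel s d
    show covRadW leeWt (macDonaldBeta (s+2+d) u) ≤
        lenB (s+2+d) - lenB (s+2) + covRadW leeWt (macDonaldBeta (s+2) u)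
    have heq : (∑ t ∈ Finset.range d, (4^((s+t)+2) + lenB ((s+t)+2)))
        = lenB (s+2+d) - lenB (s+2) := by omega
    rw [← heq]
    exact hchain
  · -- Euclidean distance bound
    have hchain := covRadW_chain euclWt 6 4 (fun n => 3 * 2^(2*n+3) + 2 * lenB (n+2))
      eucl_h4 eucl_h2 eucl_hw (fun n => hBF_eucl n) s u hus d
    have hq := eucl_q s d
    have hidx1 : 2*(s+2)-1 = 2*s+3 := by omega
    have hidx2 : (s+2+d) - (s+2) = d := by omega
    have hidx3 : (s+2)-1 = s+1 := by omega
    have hidx4 : (s+2)-2 = s := by omega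
    rw [hidx1, hidx2, hidx3, hidx4]
    have hnat : covRadEucl (macDonaldBeta (s+2+d) u) ≤
        (∑ t ∈ Finset.range d, (3 * 2^(2*(s+t)+3) + 2 * lenB ((s+t)+2)))
          + covRadEucl (macDonaldBeta (s+2) u) := hchain
    have hcast : (covRadEucl (macDonaldBeta (s+2+d) u) : ℚ)
        ≤ ((∑ t ∈ Finset.range d, (3 * 2^(2*(s+t)+3) + 2 * lenB ((s+t)+2))) : ℚ)
          + (covRadEucl (macDonaldBeta (s+2) u) : ℚ) := by exact_mod_cast hnat
    refine le_trans hcast ?_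
    linarith [add_le_add_right hq ((covRadEucl (macDonaldBeta (s+2) u) : ℚ))]
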